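/- Let A ∈ ℂ^{n×n} with Schur decomposition A = U* Δ U (U unitary, Δ upper triangular) and let D_t = diag(t, …, tⁿ) for t > 0. Then for every ε > 0 there exists t₀ > 0 such that for all t ≥ t₀: ρ(A) ≤ ‖(U* D_t⁻¹)⁻¹ A (U* D_t⁻¹)‖₂ ≤ ρ(A) + ε. -/

import Mathlib

open Matrix Filter

/-- Spectral radius of a complex square matrix. -/
noncomputable def specRad {n : ℕ} (A : Matrix (Fin n) (Fin n) ℂ) : ℝ :=
  (spectralRadius ℂ A).toReal

/-- Spectral norm (operator norm induced by the Euclidean norm) of a complex square matrix. -/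
noncomputable def specNorm {n : ℕ} (A : Matrix (Fin n) (Fin n) ℂ) : ℝ :=
  ‖Matrix.toEuclideanCLM (𝕜 := ℂ) (n := Fin n) A‖

/-- The diagonal matrix `D_t = diag(t, t², …, tⁿ)`. -/
noncomputable def Dmat (n : ℕ) (t : ℝ) : Matrix (Fin n) (Fin n) ℂ :=
  Matrix.diagonal fun i => (t : ℂ) ^ ((i : ℕ) + 1)

/-- Euclidean norm of a vector in `ℂⁿ`. -/
noncomputable def euclNorm {n : ℕ} (x : Fin n → ℂ) : ℝ :=
  ‖(EuclideanSpace.equiv (Fin n) ℂ).symm x‖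

/-- Aux: operator norm bound for diagonal matrices. -/
lemma schurAux_diag_norm {n : ℕ} (d : Fin n → ℂ) (C : ℝ) (hC : 0 ≤ C) (h : ∀ i, ‖d i‖ ≤ C) :
    specNorm (Matrix.diagonal d) ≤ C := by
  apply ContinuousLinearMap.opNorm_le_bound _ hC
  intro x
  rw [show (Matrix.toEuclideanCLM (𝕜 := ℂ) (Matrix.diagonal d)) x
      = (WithLp.equiv _ _).symm ((Matrix.diagonal d).mulVec (WithLp.equiv _ _ x)) from rfl]
  rw [EuclideanSpace.norm_eq, EuclideanSpace.norm_eq]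
  rw [show (C * Real.sqrt (∑ i, ‖x i‖ ^ 2)) = Real.sqrt (C^2 * ∑ i, ‖x i‖^2) by
    rw [Real.sqrt_mul (by positivity), Real.sqrt_sq hC]]
  apply Real.sqrt_le_sqrt
  rw [Finset.mul_sum]
  apply Finset.sum_le_sum
  intro i _
  simp only [WithLp.equiv_symm_apply, PiLp.toLp_apply, Matrix.mulVec_diagonal]
  rw [norm_mul, mul_pow]
  gcongr
  · exact h i
  · rfl

/-- Aux: spectrum is invariant under conjugation by an invertible matrix. -/
lemma schurAux_spectrum_conj {n : ℕ} (A V : Matrix (Fin n) (Fin n) ℂ) (hV : IsUnit V) :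
    spectrum ℂ (V⁻¹ * A * V) = spectrum ℂ A := by
  conv_lhs => rw [← hV.unit_spec, ← Matrix.coe_units_inv, spectrum.units_conjugate']

/-- Aux: diagonal entries of an upper triangular matrix belong to its spectrum. -/
lemma schurAux_diag_mem_spectrum {n : ℕ} (Δ : Matrix (Fin n) (Fin n) ℂ)
    (hΔ : Δ.BlockTriangular id) (i : Fin n) : Δ i i ∈ spectrum ℂ Δ := by
  rw [spectrum.mem_iff]
  intro h
  rw [Matrix.isUnit_iff_isUnit_det] at h
  have ht : (algebraMap ℂ (Matrix (Fin n) (Fin n) ℂ) (Δ i i) - Δ).BlockTriangular id := by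
    apply Matrix.BlockTriangular.sub _ hΔ
    intro a b hab
    simp [Matrix.algebraMap_eq_diagonal,
      Matrix.diagonal_apply_ne _ (by exact fun hh => absurd hh (by simpa using hab.ne'))]
  rw [Matrix.det_of_upperTriangular ht] at h
  have h0 : (algebraMap ℂ (Matrix (Fin n) (Fin n) ℂ) (Δ i i) - Δ) i i = 0 := by
    simp [Matrix.algebraMap_eq_diagonal]
  have := Finset.prod_eq_zero
    (f := fun j => (algebraMap ℂ (Matrix (Fin n) (Fin n) ℂ) (Δ i i) - Δ) j j)
    (Finset.mem_univ i) h0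
  rw [this] at h
  simp at h

/-- Aux: the inverse of `Dmat`. -/
lemma schurAux_Dmat_inv {n : ℕ} (t : ℝ) (ht : t ≠ 0) :
    (Dmat n t)⁻¹ = Matrix.diagonal fun i : Fin n => ((t:ℂ) ^ ((i:ℕ)+1))⁻¹ := by
  apply Matrix.inv_eq_right_inv
  rw [show (Dmat n t) = Matrix.diagonal fun i : Fin n => (t : ℂ) ^ ((i : ℕ) + 1) from rfl,
    Matrix.diagonal_mul_diagonal]
  ext i j
  rcases eq_or_ne i j with rfl | hij
  · simp [mul_inv_cancel₀ (pow_ne_zero ((i:ℕ)+1) (Complex.ofReal_ne_zero.mpr ht))]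
  · simp [Matrix.diagonal_apply_ne _ hij, Matrix.one_apply_ne hij]

/-- Aux: `Dmat` is invertible for `t ≠ 0`. -/
lemma schurAux_Dmat_isUnit {n : ℕ} (t : ℝ) (ht : t ≠ 0) : IsUnit (Dmat n t) := by
  rw [Matrix.isUnit_iff_isUnit_det, Dmat, Matrix.det_diagonal]
  exact isUnit_iff_ne_zero.mpr (Finset.prod_ne_zero_iff.mpr fun i _ =>
    pow_ne_zero _ (Complex.ofReal_ne_zero.mpr ht))

/-- Aux: the conjugation identity. -/
lemma schurAux_conj_eq {n : ℕ} (U Δ D : Matrix (Fin n) (Fin n) ℂ) (hU : Uᴴ * U = 1)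
    (hD : IsUnit D) :
    (Uᴴ * D⁻¹)⁻¹ * (Uᴴ * Δ * U) * (Uᴴ * D⁻¹) = D * Δ * D⁻¹ := by
  have hUU : U * Uᴴ = 1 := mul_eq_one_comm.mp hU
  have hinv : (Uᴴ * D⁻¹)⁻¹ = D * U := by
    apply Matrix.inv_eq_right_inv
    calc Uᴴ * D⁻¹ * (D * U) = Uᴴ * (D⁻¹ * D) * U := by noncomm_ring
    _ = 1 := by rw [Matrix.nonsing_inv_mul D ((Matrix.isUnit_iff_isUnit_det D).mp hD), mul_one, hU]
  rw [hinv]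
  calc D * U * (Uᴴ * Δ * U) * (Uᴴ * D⁻¹)
      = D * (U * Uᴴ) * Δ * ((U * Uᴴ) * D⁻¹) := by noncomm_ring
    _ = D * Δ * D⁻¹ := by rw [hUU]; noncomm_ring

/-- Aux: the scaled matrix family. -/
noncomputable def schurFm {n : ℕ} (Δ : Matrix (Fin n) (Fin n) ℂ) (s : ℝ) :
    Matrix (Fin n) (Fin n) ℂ :=
  Matrix.of fun i j => if (i:ℕ) ≤ (j:ℕ) then Δ i j * (s:ℂ) ^ ((j:ℕ) - (i:ℕ)) else 0

lemma schurFm_cont {n : ℕ} (Δ : Matrix (Fin n) (Fin n) ℂ) :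
    Continuous fun s : ℝ => specNorm (schurFm Δ s) := by
  apply Continuous.norm
  have h1 : Continuous fun s : ℝ => schurFm Δ s := by
    apply continuous_matrix
    intro i j
    by_cases h : (i:ℕ) ≤ (j:ℕ)
    · simp only [schurFm, Matrix.of_apply, if_pos h]
      fun_prop
    · simp only [schurFm, Matrix.of_apply, if_neg h]
      exact continuous_const
  let L : Matrix (Fin n) (Fin n) ℂ →ₗ[ℂ] (EuclideanSpace ℂ (Fin n) →L[ℂ] EuclideanSpace ℂ (Fin n)) :=
    { toFun := fun M => Matrix.toEuclideanCLM (𝕜 := ℂ) (n := Fin n) M,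
      map_add' := fun a b => map_add _ a b,
      map_smul' := fun c a => map_smul _ c a }
  exact (L.continuous_of_finiteDimensional).comp h1

lemma schurFm_zero {n : ℕ} (Δ : Matrix (Fin n) (Fin n) ℂ) :
    schurFm Δ 0 = Matrix.diagonal fun i => Δ i i := by
  ext i j
  rcases lt_trichotomy (i:ℕ) (j:ℕ) with h | h | h
  · rw [Matrix.diagonal_apply_ne _ (fun hh => by rw [hh] at h; omega)]
    simp [schurFm, h.le, zero_pow (by omega : (j:ℕ) - (i:ℕ) ≠ 0)]
  · have : i = j := Fin.ext h
    subst this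
    simp [schurFm]
  · rw [Matrix.diagonal_apply_ne _ (fun hh => by rw [hh] at h; omega)]
    simp only [schurFm, Matrix.of_apply, if_neg (not_le.mpr h)]

lemma schurFm_eq {n : ℕ} (Δ : Matrix (Fin n) (Fin n) ℂ) (hΔ : Δ.BlockTriangular id)
    (t : ℝ) (ht : t ≠ 0) :
    (Matrix.diagonal fun i : Fin n => (t:ℂ) ^ ((i:ℕ)+1)) * Δ *
      (Matrix.diagonal fun i : Fin n => ((t:ℂ) ^ ((i:ℕ)+1))⁻¹) = schurFm Δ (1/t) := by
  ext i j
  rw [Matrix.mul_diagonal, Matrix.diagonal_mul]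
  rcases le_or_gt (i:ℕ) (j:ℕ) with h | h
  · simp only [schurFm, Matrix.of_apply, if_pos h]
    have htc : ((t:ℂ)) ≠ 0 := Complex.ofReal_ne_zero.mpr ht
    have hj : (j:ℕ)+1 = ((i:ℕ)+1) + ((j:ℕ) - (i:ℕ)) := by omega
    rw [hj, pow_add (t:ℂ) ((i:ℕ)+1) ((j:ℕ) - (i:ℕ)), mul_inv, Complex.ofReal_div,
      Complex.ofReal_one, div_pow, one_pow]
    field_simp
  · have h0 : Δ i j = 0 := hΔ (by simpa using h)
    simp [schurFm, h0, not_le.mpr h]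

/-- With Schur decomposition `A = U* Δ U` and `D_t = diag(t, …, tⁿ)`, for every
`ε > 0` there is `t₀ > 0` such that for all `t ≥ t₀`:
`ρ(A) ≤ ‖(U* D_t⁻¹)⁻¹ A (U* D_t⁻¹)‖₂ ≤ ρ(A) + ε`. -/
theorem schur_scaling_norm_bounds {n : ℕ} (A U Δ : Matrix (Fin n) (Fin n) ℂ)
    (hU : Uᴴ * U = 1) (hΔ : Δ.BlockTriangular id) (hA : A = Uᴴ * Δ * U)
    (ε : ℝ) (hε : 0 < ε) :
    ∃ t₀ : ℝ, 0 < t₀ ∧ ∀ t : ℝ, t₀ ≤ t →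
      specRad A ≤ specNorm ((Uᴴ * (Dmat n t)⁻¹)⁻¹ * A * (Uᴴ * (Dmat n t)⁻¹)) ∧
      specNorm ((Uᴴ * (Dmat n t)⁻¹)⁻¹ * A * (Uᴴ * (Dmat n t)⁻¹)) ≤ specRad A + ε := by
  rcases Nat.eq_zero_or_pos n with hn | hn
  · -- trivial case n = 0
    subst hn
    haveI : Subsingleton (Matrix (Fin 0) (Fin 0) ℂ) :=
      ⟨fun a b => by ext i j; exact i.elim0⟩
    have hrad : specRad A = 0 := by
      rw [specRad, spectralRadius, spectrum.of_subsingleton]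
      simp
    refine ⟨1, one_pos, fun t ht => ?_⟩
    have hnorm : specNorm ((Uᴴ * (Dmat 0 t)⁻¹)⁻¹ * A * (Uᴴ * (Dmat 0 t)⁻¹)) = 0 := by
      rw [specNorm, show Matrix.toEuclideanCLM (𝕜 := ℂ)
        ((Uᴴ * (Dmat 0 t)⁻¹)⁻¹ * A * (Uᴴ * (Dmat 0 t)⁻¹)) = 0 from Subsingleton.elim _ _,
        norm_zero]
    rw [hrad, hnorm]
    exact ⟨le_refl 0, by linarith⟩
  · haveI : Nonempty (Fin n) := ⟨⟨0, hn⟩⟩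
    haveI : Nontrivial (EuclideanSpace ℂ (Fin n)) := inferInstance
    -- spectrum of A equals spectrum of Δ
    have hUdet : IsUnit U := by
      rw [Matrix.isUnit_iff_isUnit_det]
      have : (Uᴴ).det * U.det = 1 := by rw [← Matrix.det_mul, hU, Matrix.det_one]
      exact isUnit_of_mul_isUnit_right (this ▸ isUnit_one)
    have hUinv : U⁻¹ = Uᴴ := Matrix.inv_eq_left_inv hU
    have hspecA : spectrum ℂ A = spectrum ℂ Δ := by
      rw [hA, ← hUinv]
      exact schurAux_spectrum_conj Δ U hUdet
    -- the bound C
    set C : ℝ := Finset.univ.sup' Finset.univ_nonempty (fun i : Fin n => ‖Δ i i‖) with hCdef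
    obtain ⟨i₀, -, hi₀⟩ := Finset.exists_mem_eq_sup' (Finset.univ_nonempty)
      (fun i : Fin n => ‖Δ i i‖)
    have hC0 : 0 ≤ C := by rw [hCdef, hi₀]; exact norm_nonneg _
    -- spectral radius facts
    have hradeq : ∀ B : Matrix (Fin n) (Fin n) ℂ, spectralRadius ℂ B =
        spectralRadius ℂ (Matrix.toEuclideanCLM (𝕜 := ℂ) (n := Fin n) B) := by
      intro B
      unfold spectralRadius
      rw [AlgEquiv.spectrum_eq (Matrix.toEuclideanCLM (𝕜 := ℂ) (n := Fin n)) B]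
    have hfin : spectralRadius ℂ A ≠ ⊤ := by
      have h2 := spectrum.spectralRadius_le_nnnorm (𝕜 := ℂ)
        (a := Matrix.toEuclideanCLM (𝕜 := ℂ) (n := Fin n) A)
      rw [← hradeq A] at h2
      exact ne_top_of_le_ne_top ENNReal.coe_ne_top h2
    have hCle : C ≤ specRad A := by
      rw [hCdef, hi₀]
      have hmem : Δ i₀ i₀ ∈ spectrum ℂ A := hspecA ▸ schurAux_diag_mem_spectrum Δ hΔ i₀
      have h1 : (‖Δ i₀ i₀‖₊ : ENNReal) ≤ spectralRadius ℂ A := by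
        unfold spectralRadius
        exact le_iSup₂ (f := fun k (_ : k ∈ spectrum ℂ A) => (‖k‖₊ : ENNReal)) _ hmem
      have := ENNReal.toReal_mono hfin h1
      simpa [specRad] using this
    -- norm of the diagonal part
    have hdiagnorm : specNorm (schurFm Δ 0) ≤ C := by
      rw [schurFm_zero]
      exact schurAux_diag_norm _ C hC0 (fun i => by rw [hCdef]; exact Finset.le_sup' (fun i : Fin n => ‖Δ i i‖) (Finset.mem_univ i))
    -- continuity at 0
    have hcont := (schurFm_cont Δ).continuousAt (x := 0)
    rw [Metric.continuousAt_iff] at hcont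
    obtain ⟨δ, hδ, hδ2⟩ := hcont ε hε
    refine ⟨max 1 (2/δ), lt_of_lt_of_le one_pos (le_max_left _ _), fun t ht => ?_⟩
    have ht1 : (1:ℝ) ≤ t := le_trans (le_max_left _ _) ht
    have htpos : 0 < t := lt_of_lt_of_le one_pos ht1
    have htne : t ≠ 0 := ne_of_gt htpos
    -- the conjugated matrix
    have hB : (Uᴴ * (Dmat n t)⁻¹)⁻¹ * A * (Uᴴ * (Dmat n t)⁻¹) = schurFm Δ (1/t) := by
      rw [hA, schurAux_conj_eq U Δ (Dmat n t) hU (schurAux_Dmat_isUnit t htne),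
        schurAux_Dmat_inv t htne,
        show (Dmat n t) = Matrix.diagonal fun i : Fin n => (t : ℂ) ^ ((i : ℕ) + 1) from rfl,
        schurFm_eq Δ hΔ t htne]
    rw [hB]
    constructor
    · -- lower bound
      have hVunit : IsUnit (Uᴴ * (Dmat n t)⁻¹) := by
        rw [Matrix.isUnit_iff_isUnit_det, Matrix.det_mul]
        apply IsUnit.mul
        · have h1 : Uᴴ.det * U.det = 1 := by rw [← Matrix.det_mul, hU, Matrix.det_one]
          exact IsUnit.of_mul_eq_one _ h1
        · rw [schurAux_Dmat_inv t htne, Matrix.det_diagonal]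
          exact isUnit_iff_ne_zero.mpr (Finset.prod_ne_zero_iff.mpr fun i _ =>
            inv_ne_zero (pow_ne_zero _ (Complex.ofReal_ne_zero.mpr htne)))
      have hspecB : spectrum ℂ (schurFm Δ (1/t)) = spectrum ℂ A := by
        rw [← hB]
        exact schurAux_spectrum_conj A _ hVunit
      have h1 : spectralRadius ℂ A =
          spectralRadius ℂ (Matrix.toEuclideanCLM (𝕜 := ℂ) (n := Fin n) (schurFm Δ (1/t))) := by
        rw [← hradeq (schurFm Δ (1/t))]
        unfold spectralRadius
        rw [hspecB]
      have h2 := spectrum.spectralRadius_le_nnnorm (𝕜 := ℂ)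
        (a := Matrix.toEuclideanCLM (𝕜 := ℂ) (n := Fin n) (schurFm Δ (1/t)))
      rw [← h1] at h2
      have h3 := ENNReal.toReal_mono (by simp) h2
      simpa [specRad, specNorm] using h3
    · -- upper bound
      have hs : |1/t - 0| < δ := by
        rw [sub_zero, abs_of_pos (by positivity)]
        have h2δ : 2/δ ≤ t := le_trans (le_max_right _ _) ht
        calc 1/t ≤ 1/(2/δ) := by
              apply one_div_le_one_div_of_le (by positivity) h2δ
        _ = δ/2 := by field_simp
        _ < δ := by linarith
      have := hδ2 (x := 1/t) (by rw [Real.dist_eq]; exact hs)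
      rw [Real.dist_eq] at this
      have h4 : specNorm (schurFm Δ (1/t)) < specNorm (schurFm Δ 0) + ε := by
        cases abs_lt.mp this with
        | intro hl hr => linarith
      linarith
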